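/- arXiv:math/0408265 — 3 statements merged into one kernel-verified Lean document; each statement's English description precedes it below -/
import Mathlib

section
/- Let V be a finite-dimensional complex vector space and g a linear automorphism of V of finite order. Then ι(g) + ι(g⁻¹) = dim_ℂ V − dim_ℂ ker(g − id), i.e. the degree shifting numbers of g and of its inverse add up to the complex codimension of the fixed subspace of g in V. -/
/-- Degree shifting number of a linear automorphism of a complex vector space:
the sum over eigenvalues λ = e^{2πiθ}, θ ∈ [0,1), of θ times the complex dimension
of the corresponding eigenspace. -/
noncomputable def iota {V : Type*} [AddCommGroup V] [Module ℂ V] (g : V ≃ₗ[ℂ] V) : ℝ :=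
  ∑ᶠ μ : ℂ, Int.fract (Complex.arg μ / (2 * Real.pi)) *
    (Module.finrank ℂ (Module.End.eigenspace (g : V →ₗ[ℂ] V) μ) : ℝ)

open Module Complex Polynomial

lemma fract_add_fract_neg {x : ℝ} (hx : x ≠ 0) (hx2 : |x| < 1 / 2) :
    Int.fract x + Int.fract (-x) = 1 := by
  rw [abs_lt] at hx2
  have h1 : Int.fract x ≠ 0 := by
    rcases lt_or_gt_of_ne hx with h | h
    · have hfl : ⌊x⌋ = -1 := by
        rw [Int.floor_eq_iff]
        constructor <;> push_cast <;> linarith [hx2.1]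
      have : Int.fract x = x + 1 := by
        rw [Int.fract, hfl]; push_cast; ring
      rw [this]; intro hc; linarith [hx2.1]
    · rw [Int.fract_eq_self.mpr ⟨le_of_lt h, by linarith [hx2.2]⟩]
      exact ne_of_gt h
  rw [Int.fract_neg h1]; ring

lemma key_fract {μ : ℂ} (habs : ‖μ‖ = 1) (hμ : μ ≠ 1) :
    Int.fract (Complex.arg μ / (2 * Real.pi)) +
      Int.fract (Complex.arg μ⁻¹ / (2 * Real.pi)) = 1 := by
  have hπ := Real.pi_pos
  rw [Complex.arg_inv]
  by_cases hpi : Complex.arg μ = Real.pi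
  · rw [if_pos hpi, hpi]
    have h12 : Real.pi / (2 * Real.pi) = 1 / 2 := by
      rw [div_eq_iff (by positivity : (2 * Real.pi) ≠ 0)]; ring
    rw [h12, Int.fract_eq_self.mpr (by norm_num)]; norm_num
  · rw [if_neg hpi]
    have harg0 : Complex.arg μ ≠ 0 := by
      intro h
      apply hμ
      have h2 := Complex.norm_mul_exp_arg_mul_I μ
      rw [habs, h] at h2
      simpa using h2.symm
    have hlt : Complex.arg μ < Real.pi := lt_of_le_of_ne (Complex.arg_le_pi μ) hpi
    have hgt := Complex.neg_pi_lt_arg μ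
    rw [neg_div]
    apply fract_add_fract_neg
    · exact div_ne_zero harg0 (by positivity)
    · rw [abs_div, abs_of_pos (by positivity : (0:ℝ) < 2 * Real.pi),
        div_lt_iff₀ (by positivity)]
      rw [abs_lt]
      constructor <;> nlinarith

lemma eigenspace_inv {V : Type*} [AddCommGroup V] [Module ℂ V] (g : V ≃ₗ[ℂ] V) (μ : ℂ) :
    Module.End.eigenspace ((g⁻¹ : V ≃ₗ[ℂ] V) : V →ₗ[ℂ] V) μ =
      Module.End.eigenspace ((g : V ≃ₗ[ℂ] V) : V →ₗ[ℂ] V) μ⁻¹ := by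
  ext x
  rw [Module.End.mem_eigenspace_iff, Module.End.mem_eigenspace_iff]
  show g.symm x = μ • x ↔ g x = μ⁻¹ • x
  by_cases hμ : μ = 0
  · subst hμ
    rw [inv_zero, zero_smul]
    constructor
    · intro h
      have := congrArg (g : V → V) h
      simpa using this
    · intro h
      have := congrArg (g.symm : V → V) h
      simpa using this
  · constructor
    · intro h
      have h2 : x = μ • g x := by
        have := congrArg (g : V → V) h
        simpa using this
      calc g x = μ⁻¹ • (μ • g x) := by rw [smul_smul, inv_mul_cancel₀ hμ, one_smul]
        _ = μ⁻¹ • x := by rw [← h2]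
    · intro h
      have h2 : x = μ⁻¹ • g.symm x := by
        have := congrArg (g.symm : V → V) h
        simpa using this
      calc g.symm x = μ • (μ⁻¹ • g.symm x) := by
            rw [smul_smul, mul_inv_cancel₀ hμ, one_smul]
        _ = μ • x := by rw [← h2]

theorem iota_add_iota_inv {V : Type*} [AddCommGroup V] [Module ℂ V]
    [FiniteDimensional ℂ V] (g : V ≃ₗ[ℂ] V) (hg : IsOfFinOrder g) :
    iota g + iota g⁻¹ =
      (Module.finrank ℂ V : ℝ) -
        (Module.finrank ℂ (LinearMap.ker ((g : V →ₗ[ℂ] V) - LinearMap.id)) : ℝ) := by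
  classical
  set f : Module.End ℂ V := (g : V →ₗ[ℂ] V) with hf
  set n := orderOf g with hn
  have hn0 : 0 < n := hg.orderOf_pos
  have hgn : g ^ n = 1 := pow_orderOf_eq_one g
  have hfn : f ^ n = 1 := by
    ext x
    have h1 : (g ^ n) x = x := by rw [hgn]; rfl
    have h2 : (f ^ n) x = (g ^ n) x := by
      rw [Module.End.pow_apply, LinearEquiv.pow_apply]
      rfl
    rw [h2, h1]; rfl
  have hsq : Squarefree ((X : ℂ[X]) ^ n - 1) :=
    (Polynomial.X_pow_sub_one_separable_iff.mpr
      (Nat.cast_ne_zero.mpr hn0.ne' : (n : ℂ) ≠ 0)).squarefree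
  have hss : f.IsSemisimple :=
    Module.End.isSemisimple_of_squarefree_aeval_eq_zero hsq
      (by rw [map_sub, map_pow, aeval_X, map_one, hfn, sub_self])
  have hmax : ∀ μ : ℂ, f.maxGenEigenspace μ = f.eigenspace μ :=
    fun μ => hss.isFinitelySemisimple.maxGenEigenspace_eq_eigenspace μ
  have htop : ⨆ μ : ℂ, f.eigenspace μ = ⊤ := by
    simp_rw [← hmax]
    exact Module.End.iSup_maxGenEigenspace_eq_top f
  have hind : iSupIndep fun μ : ℂ => f.eigenspace μ := f.independent_genEigenspace 1
  have heval : ∀ μ : ℂ, f.eigenspace μ ≠ ⊥ → μ ^ n = 1 := by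
    intro μ hbot
    obtain ⟨x, hx, hx0⟩ := (Submodule.ne_bot_iff _).mp hbot
    have hx' : f x = μ • x := Module.End.mem_eigenspace_iff.mp hx
    have hpow : ∀ k : ℕ, (f ^ k) x = μ ^ k • x := by
      intro k
      induction k with
      | zero => simp
      | succ k ih =>
        rw [pow_succ', Module.End.mul_apply, ih, map_smul, hx', smul_smul, pow_succ,
          mul_comm]
    have h1 : x = μ ^ n • x := by
      have := hpow n
      rwa [hfn, Module.End.one_apply] at this
    have h2 : (μ ^ n - 1) • x = 0 := by
      rw [sub_smul, one_smul, ← h1, sub_self]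
    rcases smul_eq_zero.mp h2 with h | h
    · exact sub_eq_zero.mp h
    · exact absurd h hx0
  have hfin : {μ : ℂ | f.eigenspace μ ≠ ⊥}.Finite :=
    Set.finite_coe_iff.mp (@Finite.of_fintype _ hind.fintypeNeBotOfFiniteDimensional)
  set S : Finset ℂ := hfin.toFinset with hS
  have hmemS : ∀ μ : ℂ, μ ∈ S ↔ f.eigenspace μ ≠ ⊥ := by
    intro μ; rw [hS, Set.Finite.mem_toFinset]; rfl
  set d : ℂ → ℝ := fun μ => (Module.finrank ℂ (f.eigenspace μ) : ℝ) with hd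
  have hdS : ∀ μ : ℂ, μ ∉ S → d μ = 0 := by
    intro μ hμ
    rw [hmemS] at hμ
    push_neg at hμ
    simp [hd, hμ, finrank_bot]
  set c : ℂ → ℝ := fun μ => Int.fract (Complex.arg μ / (2 * Real.pi)) with hc
  have hsupp : ∀ μ : ℂ, μ ∉ S → c μ * d μ = 0 := fun μ hμ => by rw [hdS μ hμ, mul_zero]
  have hiota1 : iota g = ∑ μ ∈ S, c μ * d μ := by
    apply finsum_eq_finset_sum_of_support_subset
    intro μ hμ
    simp only [Function.mem_support] at hμ
    rw [Finset.mem_coe]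
    by_contra hmem
    exact hμ (hsupp μ hmem)
  have hiota2 : iota g⁻¹ = ∑ μ ∈ S, c μ⁻¹ * d μ := by
    have step1 : iota g⁻¹ = ∑ᶠ μ : ℂ, c μ * d μ⁻¹ := by
      unfold iota
      apply finsum_congr
      intro μ
      rw [eigenspace_inv]
    have step2 : (∑ᶠ μ : ℂ, c μ * d μ⁻¹) = ∑ᶠ μ : ℂ, c μ⁻¹ * d μ := by
      have h := finsum_comp_equiv (Equiv.inv ℂ) (f := fun μ : ℂ => c μ⁻¹ * d μ)
      rw [← h]
      apply finsum_congr
      intro μ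
      rw [Equiv.inv_apply, inv_inv]
    rw [step1, step2]
    apply finsum_eq_finset_sum_of_support_subset
    intro μ hμ
    simp only [Function.mem_support] at hμ
    rw [Finset.mem_coe]
    by_contra hmem
    rw [hdS μ hmem, mul_zero] at hμ
    exact hμ rfl
  have hcomb : iota g + iota g⁻¹ = ∑ μ ∈ S, (if μ = 1 then (0:ℝ) else 1) * d μ := by
    rw [hiota1, hiota2, ← Finset.sum_add_distrib]
    apply Finset.sum_congr rfl
    intro μ hμ
    rw [← add_mul]
    congr 1
    have hroot : μ ^ n = 1 := heval μ ((hmemS μ).mp hμ)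
    have habs : ‖μ‖ = 1 := by
      have h1 : ‖μ‖ ^ n = 1 := by
        rw [← norm_pow, hroot, norm_one]
      by_contra hne
      rcases lt_or_gt_of_ne hne with hl | hg'
      · have := pow_lt_one₀ (norm_nonneg μ) hl hn0.ne'
        rw [h1] at this; exact lt_irrefl _ this
      · have := one_lt_pow₀ hg' hn0.ne'
        rw [h1] at this; exact lt_irrefl _ this
    by_cases h1 : μ = 1
    · subst h1
      simp [hc, Complex.arg_one, Int.fract_zero]
    · rw [if_neg h1]
      exact key_fract habs h1
  have hinternal : DirectSum.IsInternal (fun μ : S => f.eigenspace (μ : ℂ)) := by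
    apply DirectSum.isInternal_submodule_of_iSupIndep_of_iSup_eq_top
    · exact hind.comp Subtype.val_injective
    · rw [← top_le_iff, ← htop]
      refine iSup_le fun μ => ?_
      by_cases hμ : μ ∈ S
      · exact le_iSup_of_le ⟨μ, hμ⟩ le_rfl
      · rw [hmemS] at hμ
        push_neg at hμ
        rw [hμ]
        exact bot_le
  have hdim : (Module.finrank ℂ V : ℝ) = ∑ μ ∈ S, d μ := by
    have e := LinearEquiv.ofBijective (DirectSum.coeLinearMap
      (fun μ : S => f.eigenspace (μ : ℂ))) hinternal
    have h1 : Module.finrank ℂ V = ∑ μ : S, Module.finrank ℂ (f.eigenspace (μ : ℂ)) := by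
      rw [← e.finrank_eq, Module.finrank_directSum]
    rw [h1]
    push_cast
    rw [← Finset.sum_coe_sort S (fun μ => d μ)]
  have hker : f.eigenspace 1 = LinearMap.ker (f - LinearMap.id) := by
    ext x
    rw [Module.End.mem_eigenspace_iff, LinearMap.mem_ker, LinearMap.sub_apply,
      LinearMap.id_apply, sub_eq_zero, one_smul]
  rw [hcomb, hdim, ← hker]
  have hsplit : ∑ μ ∈ S, (if μ = 1 then (0:ℝ) else 1) * d μ =
      ∑ μ ∈ S, d μ - ∑ μ ∈ S, (if μ = 1 then d μ else 0) := by
    rw [← Finset.sum_sub_distrib]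
    apply Finset.sum_congr rfl
    intro μ _
    by_cases h : μ = 1 <;> simp [h]
  rw [hsplit, Finset.sum_ite_eq' S 1 d]
  congr 1
  by_cases h1 : (1:ℂ) ∈ S
  · rw [if_pos h1]
  · rw [if_neg h1]
    exact (hdS 1 h1).symm
end

section
/- Let V be a finite-dimensional complex vector space and g, h commuting linear automorphisms of V of finite order. Then ι(g) + ι(h) − ι(gh) is a nonnegative integer, i.e. there exists n : ℕ with ι(g) + ι(h) − ι(gh) = n. -/
section Aux

variable {V : Type*} [AddCommGroup V] [Module ℂ V] [FiniteDimensional ℂ V]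

private lemma coe_mul' (g h : V ≃ₗ[ℂ] V) :
    ((g * h : V ≃ₗ[ℂ] V) : V →ₗ[ℂ] V) = (g : V →ₗ[ℂ] V) * (h : V →ₗ[ℂ] V) := rfl

private lemma coe_pow' (g : V ≃ₗ[ℂ] V) (n : ℕ) :
    ((g ^ n : V ≃ₗ[ℂ] V) : V →ₗ[ℂ] V) = (g : V →ₗ[ℂ] V) ^ n := by
  induction n with
  | zero => rfl
  | succ n ih => rw [pow_succ, pow_succ, coe_mul', ih]

private lemma eigenspace_diag {ι : Type*} [Fintype ι] [DecidableEq ℂ] (b : Module.Basis ι ℂ V)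
    (f : Module.End ℂ V) (c : ι → ℂ) (hf : ∀ i, f (b i) = c i • b i) (ν : ℂ) :
    Module.End.eigenspace f ν
      = Submodule.span ℂ (Set.range fun i : {i // c i = ν} => b i.1) := by
  refine le_antisymm ?_ ?_
  · intro x hx
    have hx' : f x = ν • x := Module.End.mem_eigenspace_iff.mp hx
    have hx0 : x = ∑ i, b.repr x i • b i := (b.sum_repr x).symm
    have h1 : f x = ∑ i, ((c i - ν) * b.repr x i + ν * b.repr x i) • b i := by
      conv_lhs => rw [hx0]
      rw [map_sum]
      refine Finset.sum_congr rfl fun i _ => ?_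
      rw [map_smul, hf, smul_smul]
      ring_nf
    have h2 : ν • x = ∑ i, (ν * b.repr x i) • b i := by
      conv_lhs => rw [hx0]
      rw [Finset.smul_sum]
      refine Finset.sum_congr rfl fun i _ => ?_
      rw [smul_smul]
    have h0 : ∑ i, ((c i - ν) * b.repr x i) • b i = 0 := by
      have := hx'
      rw [h1, h2] at this
      have h3 : ∑ i, ((c i - ν) * b.repr x i + ν * b.repr x i) • b i
          = ∑ i, ((c i - ν) * b.repr x i) • b i + ∑ i, (ν * b.repr x i) • b i := by
        rw [← Finset.sum_add_distrib]
        exact Finset.sum_congr rfl fun i _ => by rw [add_smul]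
      rw [h3] at this
      exact add_eq_right.mp this
    have hz : ∀ i, (c i - ν) * b.repr x i = 0 :=
      Fintype.linearIndependent_iff.mp b.linearIndependent _ h0
    have key : ∀ i, c i ≠ ν → b.repr x i = 0 := by
      intro i hi
      rcases mul_eq_zero.mp (hz i) with h | h
      · exact absurd (sub_eq_zero.mp h) hi
      · exact h
    have hx1 : x = ∑ i ∈ Finset.univ.filter fun i => c i = ν, b.repr x i • b i := by
      conv_lhs => rw [hx0]
      symm
      apply Finset.sum_subset (Finset.filter_subset _ _)
      intro i _ hi
      rw [key i (by simpa using hi), zero_smul]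
    rw [hx1]
    refine Submodule.sum_mem _ fun i hi => Submodule.smul_mem _ _ ?_
    exact Submodule.subset_span ⟨⟨i, (Finset.mem_filter.mp hi).2⟩, rfl⟩
  · rw [Submodule.span_le]
    rintro _ ⟨i, rfl⟩
    exact Module.End.mem_eigenspace_iff.mpr (by rw [hf, i.2])

private lemma finrank_eigenspace_diag {ι : Type*} [Fintype ι] [DecidableEq ℂ] (b : Module.Basis ι ℂ V)
    (f : Module.End ℂ V) (c : ι → ℂ) (hf : ∀ i, f (b i) = c i • b i) (ν : ℂ) :
    Module.finrank ℂ (Module.End.eigenspace f ν)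
      = (Finset.univ.filter fun i => c i = ν).card := by
  rw [eigenspace_diag b f c hf ν]
  have li : LinearIndependent ℂ (fun i : {i // c i = ν} => b i.1) :=
    b.linearIndependent.comp Subtype.val Subtype.val_injective
  rw [finrank_span_eq_card li, Fintype.card_subtype]

private lemma iota_diag {ι : Type*} [Fintype ι] (g : V ≃ₗ[ℂ] V) (b : Module.Basis ι ℂ V)
    (c : ι → ℂ) (hf : ∀ i, (g : V →ₗ[ℂ] V) (b i) = c i • b i) :
    iota g = ∑ i, Int.fract (Complex.arg (c i) / (2 * Real.pi)) := by
  classical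
  have hcard : ∀ ν : ℂ, Module.finrank ℂ (Module.End.eigenspace (g : V →ₗ[ℂ] V) ν)
      = (Finset.univ.filter fun i => c i = ν).card :=
    finrank_eigenspace_diag b _ c hf
  have hsupp : (Function.support fun ν : ℂ => Int.fract (Complex.arg ν / (2 * Real.pi)) *
      (Module.finrank ℂ (Module.End.eigenspace (g : V →ₗ[ℂ] V) ν) : ℝ))
      ⊆ ↑(Finset.image c Finset.univ) := by
    intro ν hν
    by_contra hmem
    apply hν
    have hfil : (Finset.univ.filter fun i => c i = ν) = ∅ := by
      refine Finset.filter_eq_empty_iff.mpr fun i _ h => hmem ?_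
      simp only [Finset.coe_image, Set.mem_image]
      exact ⟨i, by simp, h⟩
    simp [hcard ν, hfil]
  rw [iota, finsum_eq_finset_sum_of_support_subset _ hsupp]
  rw [← Finset.sum_fiberwise_of_maps_to (fun i _ => Finset.mem_image_of_mem c (Finset.mem_univ i))
    (fun i => Int.fract (Complex.arg (c i) / (2 * Real.pi)))]
  refine Finset.sum_congr rfl fun ν _ => ?_
  rw [hcard ν,
    Finset.sum_congr rfl fun i hi => by rw [(Finset.mem_filter.mp hi).2],
    Finset.sum_const, nsmul_eq_mul, mul_comm]

private lemma fract_add_sub (a c : ℝ) :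
    ∃ n : ℕ, Int.fract a + Int.fract c - Int.fract (a + c) = n := by
  refine ⟨(⌊Int.fract a + Int.fract c⌋).toNat, ?_⟩
  have h : Int.fract (a + c) = Int.fract (Int.fract a + Int.fract c) := by
    have : a + c = (Int.fract a + Int.fract c) + ((⌊a⌋ + ⌊c⌋ : ℤ) : ℝ) := by
      rw [Int.fract, Int.fract]
      push_cast
      ring
    rw [this, Int.fract_add_intCast]
  have h0 : (0 : ℤ) ≤ ⌊Int.fract a + Int.fract c⌋ :=
    Int.floor_nonneg.mpr (add_nonneg (Int.fract_nonneg _) (Int.fract_nonneg _))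
  rw [h, Int.self_sub_fract]
  exact_mod_cast (Int.toNat_of_nonneg h0).symm

private lemma fract_arg_mul {x y : ℂ} (hx : x ≠ 0) (hy : y ≠ 0) :
    Int.fract (Complex.arg (x * y) / (2 * Real.pi))
      = Int.fract (Complex.arg x / (2 * Real.pi) + Complex.arg y / (2 * Real.pi)) := by
  have h := Complex.arg_mul_coe_angle hx hy
  rw [← Real.Angle.coe_add] at h
  obtain ⟨k, hk⟩ := Real.Angle.angle_eq_iff_two_pi_dvd_sub.mp h
  have hπ : (2 * Real.pi) ≠ 0 := by positivity
  have heq : Complex.arg (x * y) / (2 * Real.pi)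
      = (Complex.arg x / (2 * Real.pi) + Complex.arg y / (2 * Real.pi)) + (k : ℝ) := by
    field_simp
    linarith [hk]
  rw [heq, Int.fract_add_intCast]

private lemma isSemisimple_of_finOrder (f : V ≃ₗ[ℂ] V) (hf : IsOfFinOrder f) :
    Module.End.IsSemisimple (f : V →ₗ[ℂ] V) := by
  obtain ⟨n, hn, hfn⟩ := isOfFinOrder_iff_pow_eq_one.mp hf
  apply Module.End.isSemisimple_of_squarefree_aeval_eq_zero
    (p := Polynomial.X ^ n - 1)
  · exact (Polynomial.X_pow_sub_one_separable_iff.mpr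
      (by exact_mod_cast (Nat.cast_ne_zero (R := ℂ)).mpr hn.ne')).squarefree
  · rw [map_sub, map_pow, Polynomial.aeval_X, map_one, sub_eq_zero, ← coe_pow', hfn]
    rfl

end Aux

theorem iota_add_sub_iota_mul {V : Type*} [AddCommGroup V] [Module ℂ V]
    [FiniteDimensional ℂ V] (g h : V ≃ₗ[ℂ] V)
    (hg : IsOfFinOrder g) (hh : IsOfFinOrder h) (hcomm : Commute g h) :
    ∃ n : ℕ, iota g + iota h - iota (g * h) = n := by
  classical
  have hssg := isSemisimple_of_finOrder g hg
  have hssh := isSemisimple_of_finOrder h hh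
  have hC : Commute (g : V →ₗ[ℂ] V) (h : V →ₗ[ℂ] V) := by
    have := congrArg (fun e : V ≃ₗ[ℂ] V => (e : V →ₗ[ℂ] V)) hcomm
    simpa only [coe_mul', commute_iff_eq] using this
  let F : Bool → Module.End ℂ V := fun i => if i then (g : V →ₗ[ℂ] V) else (h : V →ₗ[ℂ] V)
  have hCF : ∀ i j, Commute (F i) (F j) := by
    intro i j
    rcases i <;> rcases j <;> simp [F, hC, hC.symm, Commute.refl]
  have htop : ⨆ χ : Bool → ℂ, ⨅ i, (F i).maxGenEigenspace (χ i) = ⊤ :=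
    Module.End.iSup_iInf_maxGenEigenspace_eq_top_of_iSup_maxGenEigenspace_eq_top_of_commute F
      (fun i j _ => hCF i j) (fun i => Module.End.iSup_maxGenEigenspace_eq_top _)
  have hind : iSupIndep fun χ : Bool → ℂ => ⨅ i, (F i).maxGenEigenspace (χ i) :=
    Module.End.independent_iInf_maxGenEigenspace_of_forall_mapsTo F
      (fun i j φ => Module.End.mapsTo_maxGenEigenspace_of_comm (hCF j i) φ)
  have hint : DirectSum.IsInternal (fun χ : Bool → ℂ => ⨅ i, (F i).maxGenEigenspace (χ i)) :=
    (DirectSum.isInternal_submodule_iff_iSupIndep_and_iSup_eq_top _).mpr ⟨hind, htop⟩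
  let B := fun χ : Bool → ℂ =>
    Module.Free.chooseBasis ℂ ↥(⨅ i, (F i).maxGenEigenspace (χ i))
  let b := hint.collectedBasis B
  haveI : Finite (Σ χ : Bool → ℂ,
      Module.Free.ChooseBasisIndex ℂ ↥(⨅ i, (F i).maxGenEigenspace (χ i))) :=
    b.linearIndependent.finite
  haveI : Fintype (Σ χ : Bool → ℂ,
      Module.Free.ChooseBasisIndex ℂ ↥(⨅ i, (F i).maxGenEigenspace (χ i))) :=
    Fintype.ofFinite _
  let idx := Σ χ : Bool → ℂ,
      Module.Free.ChooseBasisIndex ℂ ↥(⨅ i, (F i).maxGenEigenspace (χ i))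
  let cg : idx → ℂ := fun i => i.1 true
  let ch : idx → ℂ := fun i => i.1 false
  have hmem : ∀ (i : idx) (j : Bool), b i ∈ (F j).maxGenEigenspace (i.1 j) := by
    intro i j
    exact (Submodule.mem_iInf _).mp (hint.collectedBasis_mem B i) j
  have hg' : ∀ i : idx, (g : V →ₗ[ℂ] V) (b i) = cg i • b i := by
    intro i
    have h1 : b i ∈ (Module.End.maxGenEigenspace (g : V →ₗ[ℂ] V)) (cg i) := hmem i true
    rw [hssg.isFinitelySemisimple.maxGenEigenspace_eq_eigenspace] at h1
    exact Module.End.mem_eigenspace_iff.mp h1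
  have hh' : ∀ i : idx, (h : V →ₗ[ℂ] V) (b i) = ch i • b i := by
    intro i
    have h1 : b i ∈ (Module.End.maxGenEigenspace (h : V →ₗ[ℂ] V)) (ch i) := hmem i false
    rw [hssh.isFinitelySemisimple.maxGenEigenspace_eq_eigenspace] at h1
    exact Module.End.mem_eigenspace_iff.mp h1
  have hgh' : ∀ i : idx, ((g * h : V ≃ₗ[ℂ] V) : V →ₗ[ℂ] V) (b i) = (cg i * ch i) • b i := by
    intro i
    have h1 : ((g * h : V ≃ₗ[ℂ] V) : V →ₗ[ℂ] V) (b i) = (g : V →ₗ[ℂ] V) ((h : V →ₗ[ℂ] V) (b i)) :=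
      rfl
    rw [h1, hh' i, map_smul, hg' i, smul_smul, mul_comm]
  have hcg0 : ∀ i : idx, cg i ≠ 0 := by
    intro i h0
    have h1 := hg' i
    rw [h0, zero_smul] at h1
    exact b.ne_zero i (g.map_eq_zero_iff.mp h1)
  have hch0 : ∀ i : idx, ch i ≠ 0 := by
    intro i h0
    have h1 := hh' i
    rw [h0, zero_smul] at h1
    exact b.ne_zero i (h.map_eq_zero_iff.mp h1)
  rw [iota_diag g b cg hg', iota_diag h b ch hh',
    iota_diag (g * h) b (fun i => cg i * ch i) hgh']
  have key : ∀ i : idx, ∃ n : ℕ,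
      Int.fract (Complex.arg (cg i) / (2 * Real.pi))
        + Int.fract (Complex.arg (ch i) / (2 * Real.pi))
        - Int.fract (Complex.arg (cg i * ch i) / (2 * Real.pi)) = n := by
    intro i
    rw [fract_arg_mul (hcg0 i) (hch0 i)]
    exact fract_add_sub _ _
  choose t ht using key
  refine ⟨∑ i, t i, ?_⟩
  push_cast
  rw [← Finset.sum_add_distrib, ← Finset.sum_sub_distrib]
  exact Finset.sum_congr rfl fun i _ => ht i
end

section
/- Let V be a finite-dimensional complex vector space and g₁, g₂, g₃ pairwise commuting linear automorphisms of V of finite order with g₁g₂g₃ = id. Let F = ker(g₁ − id) ∩ ker(g₂ − id) be the common fixed subspace and c = dim_ℂ V − dim_ℂ F. Then ι(g₁) + ι(g₂) + ι(g₃) is an integer and c ≤ ι(g₁) + ι(g₂) + ι(g₃) ≤ 2c. -/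
open Module Complex Polynomial

section Helpers

/-! ### Dimension counting helpers -/

lemma finrank_biSup_eq {K V ι : Type*} [Field K] [AddCommGroup V] [Module K V]
    [FiniteDimensional K V] {W : ι → Submodule K V} (hW : iSupIndep W) (T : Finset ι) :
    Module.finrank K ↥(⨆ p ∈ T, W p) = ∑ p ∈ T, Module.finrank K (W p) := by
  classical
  induction T using Finset.induction with
  | empty => simp
  | @insert a T ha ih =>
    rw [Finset.iSup_insert, Finset.sum_insert ha, ← ih]
    have hdis : Disjoint (W a) (⨆ p ∈ T, W p) := by
      refine (hW a).mono_right ?_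
      exact iSup_le fun p => iSup_le fun hp =>
        le_iSup_of_le p (le_iSup_of_le (by rintro rfl; exact ha hp) le_rfl)
    have := Submodule.finrank_sup_add_finrank_inf_eq (W a) (⨆ p ∈ T, W p)
    rw [hdis.eq_bot] at this
    simpa using this

lemma counting {V : Type*} [AddCommGroup V] [Module ℂ V] [FiniteDimensional ℂ V]
    {W : ℂ × ℂ → Submodule ℂ V} (hWind : iSupIndep W) {S : Finset (ℂ × ℂ)}
    (hWtop : (⨆ p ∈ S, W p) = ⊤)
    {E : ℂ → Submodule ℂ V} (hEind : iSupIndep E) {T : Finset ℂ}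
    (hEtop : (⨆ ν ∈ T, E ν) = ⊤)
    {π : ℂ × ℂ → ℂ} (hπ : ∀ p ∈ S, π p ∈ T) (hle : ∀ p ∈ S, W p ≤ E (π p))
    (θ : ℂ → ℝ) :
    ∑ ν ∈ T, θ ν * (Module.finrank ℂ (E ν) : ℝ)
      = ∑ p ∈ S, θ (π p) * (Module.finrank ℂ (W p) : ℝ) := by
  classical
  have hfiber : ∀ ν ∈ T, ∑ p ∈ S.filter (fun p => π p = ν), Module.finrank ℂ (W p)
      ≤ Module.finrank ℂ (E ν) := by
    intro ν hν
    rw [← finrank_biSup_eq hWind]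
    refine Submodule.finrank_mono ?_
    refine iSup_le fun p => iSup_le fun hp => ?_
    rcases Finset.mem_filter.mp hp with ⟨hpS, rfl⟩
    exact hle p hpS
  have htotW : ∑ p ∈ S, Module.finrank ℂ (W p) = Module.finrank ℂ V := by
    rw [← finrank_biSup_eq hWind, hWtop, finrank_top]
  have htotE : ∑ ν ∈ T, Module.finrank ℂ (E ν) = Module.finrank ℂ V := by
    rw [← finrank_biSup_eq hEind, hEtop, finrank_top]
  have hsum : ∑ ν ∈ T, ∑ p ∈ S.filter (fun p => π p = ν), Module.finrank ℂ (W p)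
      = ∑ ν ∈ T, Module.finrank ℂ (E ν) := by
    rw [Finset.sum_fiberwise_of_maps_to hπ, htotW, htotE]
  have heq : ∀ ν ∈ T, ∑ p ∈ S.filter (fun p => π p = ν), Module.finrank ℂ (W p)
      = Module.finrank ℂ (E ν) :=
    fun ν hν => (Finset.sum_eq_sum_iff_of_le hfiber).mp hsum ν hν
  rw [← Finset.sum_fiberwise_of_maps_to hπ (fun p => θ (π p) * (Module.finrank ℂ (W p) : ℝ))]
  refine Finset.sum_congr rfl fun ν hν => ?_
  rw [← heq ν hν]
  push_cast
  rw [Finset.mul_sum]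
  refine Finset.sum_congr rfl fun p hp => ?_
  rcases Finset.mem_filter.mp hp with ⟨hpS, rfl⟩
  ring

/-! ### Angle arithmetic helpers -/

lemma theta_mem (z : ℂ) : 0 ≤ Int.fract (arg z / (2 * Real.pi)) ∧
    Int.fract (arg z / (2 * Real.pi)) < 1 := ⟨Int.fract_nonneg _, Int.fract_lt_one _⟩

lemma exp_theta (z : ℂ) (hz : ‖z‖ = 1) :
    Complex.exp ((Int.fract (arg z / (2 * Real.pi)) : ℝ) * (2 * Real.pi * I)) = z := by
  have hpi : (2 * Real.pi) ≠ 0 := by positivity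
  have h1 : (Int.fract (arg z / (2 * Real.pi)) : ℝ)
      = arg z / (2 * Real.pi) - ⌊arg z / (2 * Real.pi)⌋ := (Int.self_sub_floor _).symm
  rw [h1]
  push_cast
  rw [sub_mul, Complex.exp_sub]
  have h2 : ((arg z / (2 * Real.pi) : ℝ) : ℂ) * (2 * Real.pi * I) = arg z * I := by
    have hpic : (2 * (Real.pi : ℂ)) ≠ 0 := by
      simp [Real.pi_ne_zero]
    push_cast
    field_simp
  have h3 : Complex.exp ((⌊arg z / (2 * Real.pi)⌋ : ℂ) * (2 * Real.pi * I)) = 1 := by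
    have := Complex.exp_int_mul_two_pi_mul_I (⌊arg z / (2 * Real.pi)⌋)
    convert this using 2
  rw [show ((arg z / (2 * Real.pi) : ℝ) : ℂ) = (arg z : ℂ) / (2 * (Real.pi:ℂ)) by push_cast; ring] at h2
  rw [h2, h3, div_one]
  have := Complex.norm_mul_exp_arg_mul_I z
  rw [hz] at this
  simpa using this

lemma theta_eq_zero_iff (z : ℂ) (hz : ‖z‖ = 1) :
    Int.fract (arg z / (2 * Real.pi)) = 0 ↔ z = 1 := by
  constructor
  · intro h
    have hfl : arg z / (2 * Real.pi) = (⌊arg z / (2 * Real.pi)⌋ : ℝ) := by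
      have := Int.self_sub_floor (arg z / (2 * Real.pi))
      rw [h] at this
      linarith [this]
    have hb1 : -Real.pi < arg z := Complex.neg_pi_lt_arg z
    have hb2 : arg z ≤ Real.pi := Complex.arg_le_pi z
    have hpi : (0:ℝ) < 2 * Real.pi := by positivity
    set k := ⌊arg z / (2 * Real.pi)⌋
    have hk0 : k = 0 := by
      have h1 : (k : ℝ) < 1 := by
        rw [← hfl]
        rw [div_lt_one hpi]
        linarith [Real.pi_pos]
      have h2 : (-1 : ℝ) < k := by
        rw [← hfl]
        rw [lt_div_iff₀ hpi]
        linarith [Real.pi_pos]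
      have hk1 : k < 1 := by exact_mod_cast h1
      have hk2 : (-1 : ℤ) < k := by exact_mod_cast h2
      omega
    have harg : arg z = 0 := by
      have := hfl
      rw [hk0] at this
      simp at this
      exact this
    have := Complex.norm_mul_exp_arg_mul_I z
    rw [hz, harg] at this
    simpa using this.symm
  · intro h
    subst h
    simp [Complex.arg_one]

lemma triple_fract {z₁ z₂ z₃ : ℂ} (h1 : ‖z₁‖ = 1) (h2 : ‖z₂‖ = 1)
    (h3 : ‖z₃‖ = 1) (hprod : z₁ * z₂ * z₃ = 1) :
    ∃ n : ℕ, Int.fract (arg z₁ / (2 * Real.pi)) + Int.fract (arg z₂ / (2 * Real.pi)) +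
        Int.fract (arg z₃ / (2 * Real.pi)) = (n : ℝ) ∧ n ≤ 2 ∧
        (n = 0 ↔ z₁ = 1 ∧ z₂ = 1) := by
  set a := Int.fract (arg z₁ / (2 * Real.pi))
  set b := Int.fract (arg z₂ / (2 * Real.pi))
  set d := Int.fract (arg z₃ / (2 * Real.pi))
  have hexp : Complex.exp (((a + b + d : ℝ) : ℂ) * (2 * Real.pi * I)) = 1 := by
    push_cast
    rw [add_mul, add_mul, Complex.exp_add, Complex.exp_add,
      exp_theta z₁ h1, exp_theta z₂ h2, exp_theta z₃ h3, hprod]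
  obtain ⟨m, hm⟩ := Complex.exp_eq_one_iff.mp hexp
  have hpi : (2 * (Real.pi:ℂ) * I) ≠ 0 := by
    simp [Real.pi_ne_zero, Complex.I_ne_zero]
  have hm2 : ((a + b + d : ℝ) : ℂ) = (m : ℂ) := by
    have : ((a + b + d : ℝ) : ℂ) * (2 * Real.pi * I) = (m : ℂ) * (2 * Real.pi * I) := by
      rw [hm]
    exact mul_right_cancel₀ hpi this
  have hmr : a + b + d = (m : ℝ) := by exact_mod_cast hm2
  have ha := theta_mem z₁; have hb := theta_mem z₂; have hd := theta_mem z₃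
  have hm0 : 0 ≤ m := by
    have : (0:ℝ) ≤ (m:ℝ) := by rw [← hmr]; simp only [a, b, d] at *; linarith [ha.1, hb.1, hd.1]
    exact_mod_cast this
  have hm3 : m < 3 := by
    have : (m:ℝ) < 3 := by rw [← hmr]; linarith [ha.2, hb.2, hd.2]
    exact_mod_cast this
  refine ⟨m.toNat, by rw [hmr]; norm_cast; omega, ?_, ?_⟩
  · omega
  · constructor
    · intro hn
      have hmz : m = 0 := by omega
      rw [hmz] at hmr
      have ha0 : a = 0 := by push_cast at hmr; linarith [ha.1, hb.1, hd.1]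
      have hb0 : b = 0 := by push_cast at hmr; linarith [ha.1, hb.1, hd.1]
      exact ⟨(theta_eq_zero_iff z₁ h1).mp ha0, (theta_eq_zero_iff z₂ h2).mp hb0⟩
    · rintro ⟨rfl, rfl⟩
      have hz3 : z₃ = 1 := by simpa using hprod
      have ha0 : a = 0 := (theta_eq_zero_iff _ h1).mpr rfl
      have hb0 : b = 0 := (theta_eq_zero_iff _ h2).mpr rfl
      have hd0 : d = 0 := (theta_eq_zero_iff _ h3).mpr hz3
      have : (m:ℝ) = 0 := by rw [← hmr, ha0, hb0, hd0]; ring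
      have : m = 0 := by exact_mod_cast this
      omega

/-! ### Diagonalizability of finite order automorphisms -/

variable {V : Type*} [AddCommGroup V] [Module ℂ V]

lemma coe_pow_eq_one {g : V ≃ₗ[ℂ] V} {n : ℕ} (hgn : g ^ n = 1) :
    ((g : V →ₗ[ℂ] V)) ^ n = 1 := by
  have := congrArg (LinearEquiv.automorphismGroup.toLinearMapMonoidHom (R := ℂ) (M := V)) hgn
  rw [map_pow, map_one] at this
  exact this

lemma diag_of_finOrder [FiniteDimensional ℂ V] (g : V ≃ₗ[ℂ] V) (h : IsOfFinOrder g) :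
    (⨆ μ, Module.End.eigenspace (g : V →ₗ[ℂ] V) μ) = ⊤ ∧
    ∀ μ, Module.End.maxGenEigenspace (g : V →ₗ[ℂ] V) μ
      = Module.End.eigenspace (g : V →ₗ[ℂ] V) μ := by
  set f : Module.End ℂ V := (g : V →ₗ[ℂ] V)
  have hn : orderOf g ≠ 0 := h.orderOf_pos.ne'
  have haev : aeval f (X ^ orderOf g - 1 : ℂ[X]) = 0 := by
    have : f ^ orderOf g = 1 := coe_pow_eq_one (pow_orderOf_eq_one g)
    simp [map_sub, map_pow, this]
  have hsq : Squarefree (X ^ orderOf g - 1 : ℂ[X]) :=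
    (Polynomial.X_pow_sub_one_separable_iff.mpr (by exact_mod_cast hn)).squarefree
  have hss : f.IsSemisimple := Module.End.isSemisimple_of_squarefree_aeval_eq_zero hsq haev
  have heq : ∀ μ, f.maxGenEigenspace μ = f.eigenspace μ :=
    fun μ => hss.isFinitelySemisimple.maxGenEigenspace_eq_eigenspace μ
  refine ⟨?_, heq⟩
  have := Module.End.iSup_maxGenEigenspace_eq_top f
  simpa [heq] using this

lemma abs_eq_one_of_eigen [FiniteDimensional ℂ V] (g : V ≃ₗ[ℂ] V) (h : IsOfFinOrder g)
    {μ : ℂ} {x : V} (hx : x ∈ Module.End.eigenspace (g : V →ₗ[ℂ] V) μ) (hx0 : x ≠ 0) :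
    ‖μ‖ = 1 := by
  set f : Module.End ℂ V := (g : V →ₗ[ℂ] V)
  have hn : orderOf g ≠ 0 := h.orderOf_pos.ne'
  have hev : f.HasEigenvector μ x := ⟨hx, hx0⟩
  have hpow := hev.pow_apply (orderOf g)
  have hone : f ^ orderOf g = 1 := coe_pow_eq_one (pow_orderOf_eq_one g)
  rw [hone] at hpow
  have hμn : μ ^ orderOf g = 1 := by
    have hz : (μ ^ orderOf g - 1) • x = 0 := by
      rw [sub_smul, one_smul, ← hpow]
      simp
    rcases smul_eq_zero.mp hz with h' | h'
    · exact sub_eq_zero.mp h'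
    · exact absurd h' hx0
  have habs : ‖μ‖ ^ orderOf g = 1 := by
    have := congrArg (‖·‖) hμn
    simpa [map_pow] using this
  rcases lt_trichotomy ‖μ‖ 1 with hlt | heq | hgt
  · have : ‖μ‖ ^ orderOf g < 1 :=
      pow_lt_one₀ (norm_nonneg μ) hlt hn
    linarith
  · exact heq
  · have : 1 < ‖μ‖ ^ orderOf g := one_lt_pow₀ hgt hn
    linarith

/-! ### Joint eigenspace decomposition -/

lemma joint [FiniteDimensional ℂ V]
    (f₁ f₂ : Module.End ℂ V) (hc : Commute f₁ f₂)
    (hd₁ : ∀ μ, f₁.maxGenEigenspace μ = f₁.eigenspace μ)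
    (hd₂ : ∀ μ, f₂.maxGenEigenspace μ = f₂.eigenspace μ)
    (ht₁ : ⨆ μ, f₁.eigenspace μ = ⊤) (ht₂ : ⨆ μ, f₂.eigenspace μ = ⊤) :
    (⨆ p : ℂ × ℂ, (f₁.eigenspace p.1 ⊓ f₂.eigenspace p.2)) = ⊤ ∧
      iSupIndep (fun p : ℂ × ℂ => f₁.eigenspace p.1 ⊓ f₂.eigenspace p.2) := by
  set F : Fin 2 → Module.End ℂ V := ![f₁, f₂] with hF
  have hcom : Pairwise fun i j => Commute (F i) (F j) := by
    intro i j hij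
    fin_cases i <;> fin_cases j <;> simp_all [F, Commute.refl, hc.symm]
  have hiInf : ∀ χ : Fin 2 → ℂ, (⨅ i, (F i).maxGenEigenspace (χ i)) =
      f₁.eigenspace (χ 0) ⊓ f₂.eigenspace (χ 1) := by
    intro χ
    have : (⨅ i, (F i).maxGenEigenspace (χ i)) =
        (F 0).maxGenEigenspace (χ 0) ⊓ (F 1).maxGenEigenspace (χ 1) := by
      refine le_antisymm (le_inf (iInf_le _ 0) (iInf_le _ 1)) (le_iInf fun i => ?_)
      fin_cases i
      · exact inf_le_left
      · exact inf_le_right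
    rw [this]
    simp [F, hd₁, hd₂]
  constructor
  · have h := Module.End.iSup_iInf_maxGenEigenspace_eq_top_of_iSup_maxGenEigenspace_eq_top_of_commute
      F hcom ?_
    · rw [eq_top_iff, ← h]
      refine iSup_le fun χ => ?_
      rw [hiInf χ]
      exact le_iSup_of_le (χ 0, χ 1) le_rfl
    · intro i
      fin_cases i <;> simp [F, hd₁, hd₂, ht₁, ht₂]
  · have h := Module.End.independent_iInf_maxGenEigenspace_of_forall_mapsTo F
      (fun i j φ => Module.End.mapsTo_maxGenEigenspace_of_comm ?_ φ)
    · have h2 := h.comp (f := fun p : ℂ × ℂ => ![p.1, p.2]) ?_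
      · convert h2 using 1
        funext p
        rw [Function.comp, hiInf]
        simp
      · intro p q hpq
        simpa [Prod.ext_iff] using ⟨congrFun hpq 0, congrFun hpq 1⟩
    · rcases eq_or_ne i j with rfl | hij
      · exact Commute.refl _
      · exact hcom hij.symm

end Helpers

section MainAux

variable {V : Type*} [AddCommGroup V] [Module ℂ V]

lemma mul_apply' (e₁ e₂ : V ≃ₗ[ℂ] V) (x : V) : (e₁ * e₂) x = e₁ (e₂ x) := rfl

end MainAux

theorem iota_triple_bounds {V : Type*} [AddCommGroup V] [Module ℂ V]
    [FiniteDimensional ℂ V] (g₁ g₂ g₃ : V ≃ₗ[ℂ] V)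
    (h₁ : IsOfFinOrder g₁) (h₂ : IsOfFinOrder g₂) (h₃ : IsOfFinOrder g₃)
    (hc₁₂ : Commute g₁ g₂) (hc₁₃ : Commute g₁ g₃) (hc₂₃ : Commute g₂ g₃)
    (hprod : g₁ * g₂ * g₃ = 1)
    (c : ℕ)
    (hc : c = Module.finrank ℂ V -
        Module.finrank ℂ
          ↥(LinearMap.ker ((g₁ : V →ₗ[ℂ] V) - LinearMap.id) ⊓
            LinearMap.ker ((g₂ : V →ₗ[ℂ] V) - LinearMap.id))) :
    (∃ k : ℤ, iota g₁ + iota g₂ + iota g₃ = k) ∧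
      (c : ℝ) ≤ iota g₁ + iota g₂ + iota g₃ ∧
      iota g₁ + iota g₂ + iota g₃ ≤ 2 * c := by
  classical
  set θ : ℂ → ℝ := fun ν => Int.fract (Complex.arg ν / (2 * Real.pi)) with hθ
  set f₁ : Module.End ℂ V := (g₁ : V →ₗ[ℂ] V) with hf₁
  set f₂ : Module.End ℂ V := (g₂ : V →ₗ[ℂ] V) with hf₂
  set f₃ : Module.End ℂ V := (g₃ : V →ₗ[ℂ] V) with hf₃
  obtain ⟨ht₁, hm₁⟩ := diag_of_finOrder g₁ h₁
  obtain ⟨ht₂, hm₂⟩ := diag_of_finOrder g₂ h₂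
  obtain ⟨ht₃, hm₃⟩ := diag_of_finOrder g₃ h₃
  have hf12 : Commute f₁ f₂ :=
    hc₁₂.map (LinearEquiv.automorphismGroup.toLinearMapMonoidHom (R := ℂ) (M := V))
  obtain ⟨hWtopAll, hWind⟩ := joint f₁ f₂ hf12 hm₁ hm₂ ht₁ ht₂
  set W : ℂ × ℂ → Submodule ℂ V := fun p => f₁.eigenspace p.1 ⊓ f₂.eigenspace p.2 with hW
  set T₁ : Finset ℂ := (minpoly ℂ f₁).roots.toFinset with hT₁
  set T₂ : Finset ℂ := (minpoly ℂ f₂).roots.toFinset with hT₂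
  set T₃ : Finset ℂ := (minpoly ℂ f₃).roots.toFinset with hT₃
  have hroot : ∀ (f : Module.End ℂ V) (μ : ℂ), f.eigenspace μ ≠ ⊥ →
      μ ∈ (minpoly ℂ f).roots.toFinset := by
    intro f μ hne
    have hev : f.HasEigenvalue μ := Module.End.hasEigenvalue_iff.mpr hne
    have hisr := Module.End.hasEigenvalue_iff_isRoot.mp hev
    exact Multiset.mem_toFinset.mpr
      (Polynomial.mem_roots'.mpr ⟨minpoly.ne_zero_of_finite ℂ _, hisr⟩)
  -- iota as a finite sum over the eigenvalue finset
  have hiota : ∀ (g : V ≃ₗ[ℂ] V), iota g =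
      ∑ ν ∈ (minpoly ℂ (g : V →ₗ[ℂ] V)).roots.toFinset,
        θ ν * (Module.finrank ℂ (Module.End.eigenspace (g : V →ₗ[ℂ] V) ν) : ℝ) := by
    intro g
    refine finsum_eq_finset_sum_of_support_subset _ ?_
    intro ν hν
    simp only [Function.mem_support] at hν
    have hne : Module.End.eigenspace (g : V →ₗ[ℂ] V) ν ≠ ⊥ := by
      intro hbot
      apply hν
      rw [hbot, finrank_bot]
      simp
    simpa using hroot _ ν hne
  -- the support finset of joint eigenvalue pairs
  set S : Finset (ℂ × ℂ) := (T₁ ×ˢ T₂).filter (fun p => W p ≠ ⊥) with hS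
  have hSbot : ∀ p : ℂ × ℂ, p ∉ S → W p = ⊥ := by
    intro p hp
    by_contra hne
    apply hp
    have h1 : f₁.eigenspace p.1 ≠ ⊥ := fun hb => hne (by rw [hW]; simp [hb])
    have h2 : f₂.eigenspace p.2 ≠ ⊥ := fun hb => hne (by rw [hW]; simp [hb])
    exact Finset.mem_filter.mpr ⟨Finset.mem_product.mpr ⟨hroot _ _ h1, hroot _ _ h2⟩, hne⟩
  have hWtop : (⨆ p ∈ S, W p) = ⊤ := by
    rw [eq_top_iff, ← hWtopAll]
    refine iSup_le fun p => ?_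
    by_cases hp : p ∈ S
    · exact le_iSup_of_le p (le_iSup_of_le hp le_rfl)
    · rw [hSbot p hp]
      exact bot_le
  -- nonzero joint eigenvectors for members of S
  have hvec : ∀ p ∈ S, ∃ x : V, x ∈ W p ∧ x ≠ 0 := by
    intro p hp
    have := (Finset.mem_filter.mp hp).2
    exact Submodule.exists_mem_ne_zero_of_ne_bot this
  have habs : ∀ p ∈ S, ‖p.1‖ = 1 ∧ ‖p.2‖ = 1 := by
    intro p hp
    obtain ⟨x, hx, hx0⟩ := hvec p hp
    rw [hW, Submodule.mem_inf] at hx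
    exact ⟨abs_eq_one_of_eigen g₁ h₁ hx.1 hx0, abs_eq_one_of_eigen g₂ h₂ hx.2 hx0⟩
  have hne0 : ∀ p ∈ S, p.1 * p.2 ≠ 0 := by
    intro p hp
    obtain ⟨ha1, ha2⟩ := habs p hp
    intro h
    rcases mul_eq_zero.mp h with h | h <;> simp [h] at ha1 ha2
  -- W p lies in the eigenspace of f₃ for the eigenvalue (p.1 * p.2)⁻¹
  have hle₃ : ∀ p ∈ S, W p ≤ f₃.eigenspace ((p.1 * p.2)⁻¹) := by
    intro p hp y hy
    rw [hW, Submodule.mem_inf] at hy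
    have h1y : g₁ y = p.1 • y := Module.End.mem_eigenspace_iff.mp hy.1
    have h2y : g₂ y = p.2 • y := Module.End.mem_eigenspace_iff.mp hy.2
    have hμν := hne0 p hp
    have happ : (g₁ * g₂) (g₃ y) = y := by
      have := congrArg (fun e : V ≃ₗ[ℂ] V => e y) hprod
      simpa [mul_apply'] using this
    have hp1 : p.1 ≠ 0 := left_ne_zero_of_mul hμν
    have hp2 : p.2 ≠ 0 := right_ne_zero_of_mul hμν
    have happ2 : (g₁ * g₂) (((p.1 * p.2)⁻¹ : ℂ) • y) = y := by
      have hone : (p.1 * p.2)⁻¹ * p.2 * p.1 = 1 := by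
        field_simp
      rw [mul_apply', map_smul, map_smul, h2y, map_smul, h1y, smul_smul, smul_smul,
        hone, one_smul]
    have := (g₁ * g₂).injective (happ.trans happ2.symm)
    exact Module.End.mem_eigenspace_iff.mpr this
  have hπ₃ : ∀ p ∈ S, (p.1 * p.2)⁻¹ ∈ T₃ := by
    intro p hp
    obtain ⟨x, hx, hx0⟩ := hvec p hp
    refine hroot f₃ _ ?_
    intro hbot
    have := hle₃ p hp hx
    rw [hbot] at this
    exact hx0 (Submodule.mem_bot ℂ |>.mp this)
  -- suprema of eigenspaces over the eigenvalue finsets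
  have hEtop : ∀ (f : Module.End ℂ V), (⨆ μ, f.eigenspace μ) = ⊤ →
      (⨆ ν ∈ (minpoly ℂ f).roots.toFinset, f.eigenspace ν) = ⊤ := by
    intro f htop
    rw [eq_top_iff, ← htop]
    refine iSup_le fun μ => ?_
    by_cases hb : f.eigenspace μ = ⊥
    · rw [hb]; exact bot_le
    · exact le_iSup_of_le μ (le_iSup_of_le (hroot f μ hb) le_rfl)
  -- the three sum computations
  have hs₁ : iota g₁ = ∑ p ∈ S, θ p.1 * (Module.finrank ℂ (W p) : ℝ) := by
    rw [hiota g₁]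
    exact counting hWind hWtop (Module.End.eigenspaces_iSupIndep f₁) (hEtop f₁ ht₁)
      (fun p hp => (Finset.mem_product.mp (Finset.mem_filter.mp hp).1).1)
      (fun p hp => inf_le_left) θ
  have hs₂ : iota g₂ = ∑ p ∈ S, θ p.2 * (Module.finrank ℂ (W p) : ℝ) := by
    rw [hiota g₂]
    exact counting hWind hWtop (Module.End.eigenspaces_iSupIndep f₂) (hEtop f₂ ht₂)
      (fun p hp => (Finset.mem_product.mp (Finset.mem_filter.mp hp).1).2)
      (fun p hp => inf_le_right) θ
  have hs₃ : iota g₃ = ∑ p ∈ S, θ ((p.1 * p.2)⁻¹) * (Module.finrank ℂ (W p) : ℝ) := by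
    rw [hiota g₃]
    exact counting hWind hWtop (Module.End.eigenspaces_iSupIndep f₃) (hEtop f₃ ht₃)
      hπ₃ hle₃ θ
  -- integer values on each joint eigenspace
  have hkey : ∀ p ∈ S, ∃ n : ℕ, (θ p.1 + θ p.2 + θ ((p.1 * p.2)⁻¹) = (n : ℝ)) ∧ n ≤ 2 ∧
      (n = 0 ↔ p = ((1 : ℂ), (1 : ℂ))) := by
    intro p hp
    obtain ⟨ha1, ha2⟩ := habs p hp
    have ha3 : ‖(p.1 * p.2)⁻¹‖ = 1 := by
      rw [norm_inv, norm_mul, ha1, ha2]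
      norm_num
    have hpr : p.1 * p.2 * (p.1 * p.2)⁻¹ = 1 := mul_inv_cancel₀ (hne0 p hp)
    obtain ⟨n, hn, hn2, hn0⟩ := triple_fract ha1 ha2 ha3 hpr
    exact ⟨n, hn, hn2, by rw [hn0, Prod.ext_iff]⟩
  choose! n hn hn2 hn0 using hkey
  set Dn : ℂ × ℂ → ℕ := fun p => Module.finrank ℂ (W p) with hDn
  set N : ℕ := ∑ p ∈ S, n p * Dn p with hN
  have htotal : iota g₁ + iota g₂ + iota g₃ = (N : ℝ) := by
    rw [hs₁, hs₂, hs₃, ← Finset.sum_add_distrib, ← Finset.sum_add_distrib, hN]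
    push_cast
    refine Finset.sum_congr rfl fun p hp => ?_
    rw [← add_mul, ← add_mul, hn p hp]
  -- dimension bookkeeping
  have htotD : ∑ p ∈ S, Dn p = Module.finrank ℂ V := by
    rw [hDn, ← finrank_biSup_eq hWind, hWtop, finrank_top]
  have hFW : (LinearMap.ker (f₁ - LinearMap.id) ⊓ LinearMap.ker (f₂ - LinearMap.id))
      = W ((1 : ℂ), (1 : ℂ)) := by
    ext x
    simp [hW, Submodule.mem_inf, LinearMap.mem_ker, Module.End.mem_eigenspace_iff,
      LinearMap.sub_apply, sub_eq_zero]
  set dF : ℕ := Module.finrank ℂ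
      ↥(LinearMap.ker (f₁ - LinearMap.id) ⊓ LinearMap.ker (f₂ - LinearMap.id)) with hdF
  have hdFW : dF = Dn ((1 : ℂ), (1 : ℂ)) := by rw [hdF, hDn, hFW]
  set M : ℕ := ∑ p ∈ S.erase ((1 : ℂ), (1 : ℂ)), Dn p with hM
  have hMF : M + dF = Module.finrank ℂ V := by
    by_cases h11 : ((1 : ℂ), (1 : ℂ)) ∈ S
    · rw [hM, hdFW, ← htotD]
      exact Finset.sum_erase_add S Dn h11
    · have hW11 : W ((1 : ℂ), (1 : ℂ)) = ⊥ := hSbot _ h11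
      have hD0 : dF = 0 := by
        rw [hdFW]
        show Module.finrank ℂ ↥(W ((1 : ℂ), (1 : ℂ))) = 0
        rw [hW11]
        exact finrank_bot ℂ V
      rw [hD0, hM, Finset.erase_eq_of_notMem h11, htotD]
      omega
  have hcM : c = M := by omega
  -- bounds on N
  have hlow : M ≤ N := by
    calc M = ∑ p ∈ S.erase ((1 : ℂ), (1 : ℂ)), Dn p := hM
    _ ≤ ∑ p ∈ S.erase ((1 : ℂ), (1 : ℂ)), n p * Dn p := by
        refine Finset.sum_le_sum fun p hp => ?_
        have hpS : p ∈ S := Finset.mem_of_mem_erase hp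
        have hp1 : p ≠ ((1 : ℂ), (1 : ℂ)) := Finset.ne_of_mem_erase hp
        have : n p ≠ 0 := fun h => hp1 ((hn0 p hpS).mp h)
        have : 1 ≤ n p := Nat.one_le_iff_ne_zero.mpr this
        calc Dn p = 1 * Dn p := (one_mul _).symm
        _ ≤ n p * Dn p := Nat.mul_le_mul_right _ this
    _ ≤ ∑ p ∈ S, n p * Dn p :=
        Finset.sum_le_sum_of_subset (Finset.erase_subset _ _)
    _ = N := hN.symm
  have hNerase : N = ∑ p ∈ S.erase ((1 : ℂ), (1 : ℂ)), n p * Dn p := by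
    by_cases h11 : ((1 : ℂ), (1 : ℂ)) ∈ S
    · have hn11 : n ((1 : ℂ), (1 : ℂ)) = 0 := (hn0 _ h11).mpr rfl
      rw [hN, ← Finset.sum_erase_add S _ h11, hn11]
      simp
    · rw [hN, Finset.erase_eq_of_notMem h11]
  have hhigh : N ≤ 2 * M := by
    rw [hNerase, hM, Finset.mul_sum]
    refine Finset.sum_le_sum fun p hp => ?_
    exact Nat.mul_le_mul_right _ (hn2 p (Finset.mem_of_mem_erase hp))
  refine ⟨⟨(N : ℤ), by rw [htotal]; push_cast; ring⟩, ?_, ?_⟩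
  · rw [htotal, hcM]
    exact_mod_cast hlow
  · rw [htotal, hcM]
    calc (N : ℝ) ≤ ((2 * M : ℕ) : ℝ) := by exact_mod_cast hhigh
    _ = 2 * (M : ℝ) := by push_cast; ring
end
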